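/- Relation head of the PT construction (β→∞ limit): Consider the relation head with weights W_KQ^rel = β(Σ_{l=1}^L E(r_l) + p)E([sep])^T and W_OV^rel = Σ_{l=1}^L (Σ_{u∈U_l} E(u)) E(r_l)^T, where p = Σ_{i=1}^{S+2} E(p_{-i+1}). For every PT sequence X whose last block has attribute type l_N, as β→∞ the attention at the last position concentrates entirely on the relation token of the last block, so that lim_{β→∞} g_rel(X) = E(r_{l_N}) and lim_{β→∞} W_OV^rel g_rel(X) = Σ_{u∈U_{l_N}} E(u), i.e., the head outputs the sum of all attribute values of type l_N. -/

import Mathlib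

open Filter Topology Finset Matrix

namespace CR

/-- Vocabulary tokens: `M` subjects, `L` attribute types each with `U` values,
`G` grammar tokens, `L` relation tokens, and a separator. -/
inductive Tok (M L U G : ℕ) : Type where
  | subj : Fin M → Tok M L U G
  | attr : Fin L → Fin U → Tok M L U G
  | gram : Fin G → Tok M L U G
  | rel  : Fin L → Tok M L U G
  | sep  : Tok M L U G
deriving DecidableEq, Fintype

/-- Embedding dimension: one coordinate per vocabulary token plus `P` positional coordinates. -/
abbrev Dim (M L U G P : ℕ) := Tok M L U G ⊕ Fin P

abbrev Vec (M L U G P : ℕ) := Dim M L U G P → ℝ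


lemma softmax_tendsto (t : ℕ) (c : ℕ → ℝ) (j0 : ℕ) (hj0 : j0 ∈ Finset.range t)
    (hmax : ∀ j ∈ Finset.range t, j ≠ j0 → c j < c j0) (j : ℕ) (hj : j ∈ Finset.range t) :
    Tendsto (fun β : ℝ => Real.exp (β * c j) / ∑ i ∈ Finset.range t, Real.exp (β * c i))
      atTop (𝓝 (if j = j0 then 1 else 0)) := by
  have key : ∀ i ∈ Finset.range t,
      Tendsto (fun β : ℝ => Real.exp (β * (c i - c j0))) atTop
        (𝓝 (if i = j0 then 1 else 0)) := by
    intro i hi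
    by_cases h : i = j0
    · simp [h]
    · simp only [if_neg h]
      have hneg : c i - c j0 < 0 := sub_neg.2 (hmax i hi h)
      have h1 : Tendsto (fun β : ℝ => β * (c i - c j0)) atTop atBot :=
        tendsto_id.atTop_mul_const_of_neg hneg
      exact Real.tendsto_exp_atBot.comp h1
  have hden : Tendsto (fun β : ℝ => ∑ i ∈ Finset.range t, Real.exp (β * (c i - c j0)))
      atTop (𝓝 1) := by
    have := tendsto_finset_sum (Finset.range t) key
    simpa [Finset.sum_ite_eq' (Finset.range t) j0, hj0] using this
  have hmain : Tendsto (fun β : ℝ =>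
      Real.exp (β * (c j - c j0)) / ∑ i ∈ Finset.range t, Real.exp (β * (c i - c j0)))
      atTop (𝓝 (if j = j0 then 1 else 0)) := by
    have h := (key j hj).div hden one_ne_zero
    rw [div_one] at h
    exact h
  convert hmain using 2 with β
  have hp1 : (0:ℝ) < ∑ i ∈ Finset.range t, Real.exp (β * c i) :=
    Finset.sum_pos (fun i _ => Real.exp_pos _) ⟨j0, hj0⟩
  have hp2 : (0:ℝ) < ∑ i ∈ Finset.range t, Real.exp (β * (c i - c j0)) :=
    Finset.sum_pos (fun i _ => Real.exp_pos _) ⟨j0, hj0⟩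
  rw [div_eq_div_iff hp1.ne' hp2.ne', Finset.mul_sum, Finset.mul_sum]
  refine Finset.sum_congr rfl fun i _ => ?_
  rw [← Real.exp_add, ← Real.exp_add]
  ring_nf

variable {M L U G P : ℕ}

/-- One-hot token embedding `E(v)`. -/
def E (v : Tok M L U G) : Vec M L U G P :=
  fun i => if i = Sum.inl v then 1 else 0

/-- One-hot positional encoding for relative position `-k`
(`pos 0 = E(p₀)`, `pos 1 = E(p₋₁)`, ...); zero if `k ≥ P`. -/
def pos (k : ℕ) : Vec M L U G P :=
  fun i => match i with
  | Sum.inl _ => 0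
  | Sum.inr j => if (j : ℕ) = k then 1 else 0

/-- Softmax attention weight of (0-indexed) row `j` among rows `0,…,t-1`, with query row `t-1`;
row `i` carries the relative positional encoding `p_{-(t-1-i)}`. -/
noncomputable def attn (W : Matrix (Dim M L U G P) (Dim M L U G P) ℝ)
    (X : ℕ → Vec M L U G P) (t j : ℕ) : ℝ :=
  Real.exp ((X j + pos (t - 1 - j)) ⬝ᵥ W.mulVec (X (t - 1))) /
    ∑ i ∈ Finset.range t, Real.exp ((X i + pos (t - 1 - i)) ⬝ᵥ W.mulVec (X (t - 1)))

/-- Attention-head output `g_h^t(X)` (attention over the first `t` rows, query at row `t-1`). -/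
noncomputable def gHead (W : Matrix (Dim M L U G P) (Dim M L U G P) ℝ)
    (X : ℕ → Vec M L U G P) (t : ℕ) : Vec M L U G P :=
  ∑ j ∈ Finset.range t, attn W X t j • X j

/-- Token at (0-indexed) position `t` of a PT sequence with subject `jstar`:
block `k` occupies positions `k(S+3),…,k(S+3)+S+1` (subject, `S` middle tokens, separator),
followed (except after the last block) by the attribute `a_{jstar}^{ltype k}`. -/
def ptTok (S : ℕ) (jstar : Fin M) (ltype : ℕ → Fin L)
    (mid : ℕ → ℕ → Tok M L U G) (a : Fin M → Fin L → Fin U) (t : ℕ) : Tok M L U G :=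
  let k := t / (S + 3)
  let r := t % (S + 3)
  if r = 0 then Tok.subj jstar
  else if r ≤ S then mid k (r - 1)
  else if r = S + 1 then Tok.sep
  else Tok.attr (ltype k) (a jstar (ltype k))

/-- Token at (0-indexed) position `t` of an ICL sequence with shared attribute type `lstar`
and subjects `js 0, js 1, …`: the pattern is subject, separator, attribute, subject, … -/
def iclTok (a : Fin M → Fin L → Fin U) (js : ℕ → Fin M) (lstar : Fin L) (t : ℕ) :
    Tok M L U G :=
  if t % 3 = 0 then Tok.subj (js (t / 3))
  else if t % 3 = 1 then Tok.sep
  else Tok.attr lstar (a (js (t / 3)) lstar)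



variable {M L U G P : ℕ}

lemma E_dot_E (v w : Tok M L U G) : (E v : Vec M L U G P) ⬝ᵥ E w = if v = w then 1 else 0 := by
  simp [E, dotProduct, ite_and, eq_comm]

lemma E_dot_pos (v : Tok M L U G) (k : ℕ) : (E v : Vec M L U G P) ⬝ᵥ pos k = 0 := by
  simp [E, dotProduct, pos]

lemma pos_dot_E (v : Tok M L U G) (k : ℕ) : (pos k : Vec M L U G P) ⬝ᵥ E v = 0 := by
  simp only [dotProduct, pos, E]
  apply Finset.sum_eq_zero
  intro i _
  rcases i with i | i <;> simp

lemma pos_dot_pos (i k : ℕ) :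
    (pos i : Vec M L U G P) ⬝ᵥ pos k = if i = k ∧ i < P then 1 else 0 := by
  classical
  simp only [dotProduct, pos]
  rw [Fintype.sum_sum_type]
  simp only [mul_zero, Finset.sum_const_zero, zero_add, mul_ite, mul_one, ite_and]
  by_cases h : i = k ∧ i < P
  · obtain ⟨rfl, hP⟩ := h
    rw [Finset.sum_eq_single (⟨i, hP⟩ : Fin P)] <;>
      simp +contextual [hP, Fin.ext_iff]
  · rw [Finset.sum_eq_zero]
    · split_ifs with h1 h2
      · exact absurd ⟨h1, h2⟩ h
      · rfl
      · rfl
    · intro j _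
      by_cases h1 : (j:ℕ) = i
      · have h2 : ¬((j:ℕ) = k) := fun hk => h ⟨h1 ▸ hk, h1 ▸ j.2⟩
        simp only [h1, if_pos rfl]
        rw [if_neg (h1 ▸ h2)]
      · simp [h1]

lemma dotProduct_sum' {ι : Type*} (s : Finset ι) (v : Vec M L U G P)
    (f : ι → Vec M L U G P) : v ⬝ᵥ (∑ i ∈ s, f i) = ∑ i ∈ s, v ⬝ᵥ f i := by
  simp only [dotProduct, Finset.sum_apply, Finset.mul_sum]
  exact Finset.sum_comm

lemma sum_dotProduct' {ι : Type*} (s : Finset ι) (v : Vec M L U G P)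
    (f : ι → Vec M L U G P) : (∑ i ∈ s, f i) ⬝ᵥ v = ∑ i ∈ s, f i ⬝ᵥ v := by
  simp only [dotProduct, Finset.sum_apply, Finset.sum_mul]
  exact Finset.sum_comm

lemma vecMulVec_mulVec' (u w x : Vec M L U G P) :
    (Matrix.vecMulVec u w).mulVec x = (w ⬝ᵥ x) • u := by
  funext i
  simp only [Matrix.mulVec, Matrix.vecMulVec_apply, dotProduct, Pi.smul_apply, smul_eq_mul,
    Finset.sum_mul, Finset.mul_sum]
  exact Finset.sum_congr rfl fun j _ => by ring

lemma E_dot_relsum (w : Tok M L U G) :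
    (E w : Vec M L U G P) ⬝ᵥ (∑ l : Fin L, E (Tok.rel l)) =
      if ∃ l, w = Tok.rel l then 1 else 0 := by
  rw [dotProduct_sum']
  simp only [E_dot_E]
  by_cases h : ∃ l, w = Tok.rel l
  · obtain ⟨l0, rfl⟩ := h
    rw [if_pos ⟨l0, rfl⟩, Finset.sum_eq_single l0] <;> simp +contextual [Tok.rel.injEq, eq_comm]
  · rw [if_neg h, Finset.sum_eq_zero]
    intro l _
    rw [if_neg (fun hl => h ⟨l, hl⟩)]

lemma pos_dot_pvec (S k : ℕ) (hP : S + 2 ≤ P) :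
    (pos k : Vec M L U G P) ⬝ᵥ (∑ i ∈ Finset.range (S + 2), pos i) =
      if k < S + 2 then 1 else 0 := by
  rw [dotProduct_sum']
  simp only [pos_dot_pos]
  by_cases h : k < S + 2
  · rw [if_pos h, Finset.sum_eq_single k] <;>
      simp +contextual [Finset.mem_range, h, Nat.lt_of_lt_of_le h hP, eq_comm]
  · rw [if_neg h, Finset.sum_eq_zero]
    intro i hi
    rw [if_neg]
    rintro ⟨rfl, -⟩
    exact h (Finset.mem_range.1 hi)

lemma sum_mulVec' {ι : Type*} (s : Finset ι) (f : ι → Matrix (Dim M L U G P) (Dim M L U G P) ℝ)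
    (x : Vec M L U G P) : (∑ i ∈ s, f i).mulVec x = ∑ i ∈ s, (f i).mulVec x := by
  funext i
  simp only [Matrix.mulVec, dotProduct, Matrix.sum_apply, Finset.sum_apply, Finset.sum_mul]
  exact Finset.sum_comm

lemma ptTok_block (S : ℕ) (jstar : Fin M) (ltype : ℕ → Fin L)
    (mid : ℕ → ℕ → Tok M L U G) (a : Fin M → Fin L → Fin U) (k r : ℕ) (hr : r < S + 3) :
    ptTok S jstar ltype mid a (k * (S + 3) + r) =
      if r = 0 then Tok.subj jstar
      else if r ≤ S then mid k (r - 1)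
      else if r = S + 1 then Tok.sep
      else Tok.attr (ltype k) (a jstar (ltype k)) := by
  have hd : (k * (S + 3) + r) / (S + 3) = k := by
    rw [mul_comm, Nat.mul_add_div (by omega), Nat.div_eq_of_lt hr, add_zero]
  have hm : (k * (S + 3) + r) % (S + 3) = r := by
    rw [mul_comm, Nat.mul_add_mod, Nat.mod_eq_of_lt hr]
  simp only [ptTok, hd, hm]


/-- Relation head of the PT construction (β→∞ limit). -/
theorem relation_head_PT_limit
    (M L U G P S N : ℕ) (hN : 0 < N) (hP : N * (S + 3) - 1 ≤ P)
    (a : Fin M → Fin L → Fin U) (jstar : Fin M) (ltype : ℕ → Fin L)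
    (mid : ℕ → ℕ → Tok M L U G) (relIdx : ℕ → ℕ)
    (hmid : ∀ k < N, relIdx k < S ∧ mid k (relIdx k) = Tok.rel (ltype k) ∧
      ∀ i < S, i ≠ relIdx k → ∃ g : Fin G, mid k i = Tok.gram g)
    (X : ℕ → Vec M L U G P) (hX : ∀ t, X t = E (ptTok S jstar ltype mid a t))
    (T : ℕ) (hT : T = N * (S + 3) - 1)
    (pvec : Vec M L U G P) (hpvec : pvec = ∑ i ∈ Finset.range (S + 2), pos i)
    (WKQ0 WOV : Matrix (Dim M L U G P) (Dim M L U G P) ℝ)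
    (hKQ : WKQ0 = Matrix.vecMulVec ((∑ l : Fin L, E (Tok.rel l)) + pvec) (E Tok.sep))
    (hOV : WOV = ∑ l : Fin L,
      Matrix.vecMulVec (∑ u : Fin U, E (Tok.attr l u)) (E (Tok.rel l))) :
    Filter.Tendsto (fun β : ℝ => gHead (β • WKQ0) X T) Filter.atTop
      (𝓝 (E (Tok.rel (ltype (N - 1))))) ∧
    Filter.Tendsto (fun β : ℝ => WOV.mulVec (gHead (β • WKQ0) X T)) Filter.atTop
      (𝓝 (∑ u : Fin U, E (Tok.attr (ltype (N - 1)) u))) := by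
  classical
  -- normalize N = N' + 1
  obtain ⟨N, rfl⟩ : ∃ n, N = n + 1 := ⟨N - 1, (Nat.succ_pred_eq_of_pos hN).symm⟩
  simp only [Nat.add_sub_cancel] at *
  have hS3 : (0:ℕ) < S + 3 := by omega
  have hmul : (N + 1) * (S + 3) = N * (S + 3) + (S + 3) := by ring
  have hTeq : T = N * (S + 3) + (S + 2) := by omega
  have hSP : S + 2 ≤ P := by
    have h1 : S + 3 ≤ (N + 1) * (S + 3) := by nlinarith
    omega
  obtain ⟨hrid, hmidrel, hgram⟩ := hmid N (by omega)
  set jr : ℕ := N * (S + 3) + (relIdx N + 1) with hjr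
  have hjrT : jr < T := by omega
  -- token identities
  have htokq : ptTok S jstar ltype mid a (T - 1) = Tok.sep := by
    have h1 : T - 1 = N * (S + 3) + (S + 1) := by omega
    rw [h1, ptTok_block S jstar ltype mid a N (S + 1) (by omega)]
    simp
  have htokjr : ptTok S jstar ltype mid a jr = Tok.rel (ltype N) := by
    rw [hjr, ptTok_block S jstar ltype mid a N (relIdx N + 1) (by omega)]
    simp only [Nat.add_sub_cancel]
    rw [if_neg (by omega), if_pos (by omega), hmidrel]
  -- the score function
  set v : Vec M L U G P := (∑ l : Fin L, E (Tok.rel l)) + pvec with hv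
  have hWQ : WKQ0.mulVec (X (T - 1)) = v := by
    rw [hKQ, hX, htokq, vecMulVec_mulVec', E_dot_E, if_pos rfl, one_smul]
  set c : ℕ → ℝ := fun j => (X j + pos (T - 1 - j)) ⬝ᵥ v with hcdef
  have hc : ∀ j, c j =
      (if ∃ l, ptTok S jstar ltype mid a j = Tok.rel l then 1 else 0) +
      (if T - 1 - j < S + 2 then 1 else 0) := by
    intro j
    rw [hcdef]
    simp only [hv, hpvec, hX]
    rw [add_dotProduct, dotProduct_add, dotProduct_add, E_dot_relsum,
      pos_dot_pvec S _ hSP, dotProduct_sum', dotProduct_sum']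
    simp only [E_dot_pos, pos_dot_E, Finset.sum_const_zero]
    ring
  -- score comparisons
  have hcjr : c jr = 2 := by
    rw [hc, htokjr, if_pos ⟨ltype N, rfl⟩, if_pos (by omega)]
    norm_num
  have hmax : ∀ j ∈ Finset.range T, j ≠ jr → c j < c jr := by
    intro j hj hne
    rw [Finset.mem_range] at hj
    rw [hcjr, hc]
    by_cases hrel : ∃ l, ptTok S jstar ltype mid a j = Tok.rel l
    · rw [if_pos hrel]
      obtain ⟨l, htokj⟩ := hrel
      rw [if_neg]
      · norm_num
      intro hpos
      -- derive j = jr, contradiction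
      apply hne
      have hjge : N * (S + 3) ≤ j := by
        have hj1 : j ≤ T - 1 := by omega
        have hsub : T - 1 - j + j = T - 1 := Nat.sub_add_cancel hj1
        omega
      have hkN : j / (S + 3) = N := by
        have hup : j / (S + 3) < N + 1 := (Nat.div_lt_iff_lt_mul hS3).2 (by omega)
        have hlo : N ≤ j / (S + 3) := (Nat.le_div_iff_mul_le hS3).2 hjge
        omega
      have hjeq0 : j = N * (S + 3) + j % (S + 3) := by
        conv_lhs => rw [← Nat.div_add_mod j (S + 3)]
        rw [hkN, mul_comm]
      obtain ⟨r, hrlt, hjeq⟩ : ∃ r, r < S + 3 ∧ j = N * (S + 3) + r :=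
        ⟨j % (S + 3), Nat.mod_lt _ hS3, hjeq0⟩
      rw [hjeq, ptTok_block S jstar ltype mid a N r hrlt] at htokj
      have hr0 : r ≠ 0 := by rintro rfl; simp at htokj
      have hrS : r ≤ S := by
        by_contra hrS
        rw [if_neg hr0, if_neg hrS] at htokj
        split at htokj <;> simp at htokj
      rw [if_neg hr0, if_pos hrS] at htokj
      have : r - 1 = relIdx N := by
        by_contra hri
        obtain ⟨g, hg⟩ := hgram (r - 1) (by omega) hri
        rw [hg] at htokj
        simp at htokj
      omega
    · rw [if_neg hrel]
      split <;> norm_num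
  -- attention formula
  have hattn : ∀ (β : ℝ) (j : ℕ), attn (β • WKQ0) X T j =
      Real.exp (β * c j) / ∑ i ∈ Finset.range T, Real.exp (β * c i) := by
    intro β j
    have hs : ∀ i, (X i + pos (T - 1 - i)) ⬝ᵥ ((β • WKQ0).mulVec (X (T - 1))) = β * c i := by
      intro i
      rw [Matrix.smul_mulVec, hWQ, dotProduct_smul, smul_eq_mul, hcdef]
    simp only [attn, hs]
  -- main limit
  have hXjr : X jr = E (Tok.rel (ltype N)) := by rw [hX, htokjr]
  have h1 : Filter.Tendsto (fun β : ℝ => gHead (β • WKQ0) X T) Filter.atTop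
      (𝓝 (E (Tok.rel (ltype N)))) := by
    have heq : (fun β : ℝ => gHead (β • WKQ0) X T) =
        fun β => ∑ j ∈ Finset.range T,
          (Real.exp (β * c j) / ∑ i ∈ Finset.range T, Real.exp (β * c i)) • X j := by
      funext β
      simp only [gHead, hattn]
    rw [heq]
    have hlim : Filter.Tendsto (fun β : ℝ => ∑ j ∈ Finset.range T,
        (Real.exp (β * c j) / ∑ i ∈ Finset.range T, Real.exp (β * c i)) • X j)
        Filter.atTop (𝓝 (∑ j ∈ Finset.range T, (if j = jr then (1:ℝ) else 0) • X j)) := by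
      apply tendsto_finset_sum
      intro j hj
      exact (softmax_tendsto T c jr (Finset.mem_range.2 hjrT) hmax j hj).smul_const (X j)
    have hsum : (∑ j ∈ Finset.range T, (if j = jr then (1:ℝ) else 0) • X j) =
        E (Tok.rel (ltype N)) := by
      rw [← hXjr]
      rw [Finset.sum_eq_single jr]
      · simp
      · intro b _ hb; simp [hb]
      · intro h; exact absurd (Finset.mem_range.2 hjrT) h
    rwa [hsum] at hlim
  refine ⟨h1, ?_⟩
  have hcont : Continuous (fun y : Vec M L U G P => WOV.mulVec y) :=
    Continuous.matrix_mulVec continuous_const continuous_id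
  have h2 := (hcont.tendsto _).comp h1
  have hOVval : WOV.mulVec (E (Tok.rel (ltype N))) = ∑ u : Fin U, E (Tok.attr (ltype N) u) := by
    rw [hOV, sum_mulVec']
    rw [Finset.sum_eq_single (ltype N)]
    · rw [vecMulVec_mulVec', E_dot_E, if_pos rfl, one_smul]
    · intro l _ hl
      rw [vecMulVec_mulVec', E_dot_E, if_neg (by simp [Tok.rel.injEq, hl]), zero_smul]
    · intro h; exact absurd (Finset.mem_univ _) h
  rwa [hOVval] at h2

end CR
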